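/- Let F : ℝ^n → ℝ^n be quadratic, H a real n×n matrix, and let x, y : ℝ → ℝ^n be differentiable curves satisfying the mutually coupled system x'(t) = F(x(t)) + (H − DF(s(t)))·r(t), y'(t) = F(y(t)) − (H − DF(s(t)))·r(t), where s(t) = (x(t)+y(t))/2 and r(t) = (x(t)−y(t))/2. Then the error dynamics is exactly linear: r'(t) = H·r(t) for all t. -/

import Mathlib

private lemma quadratic_fderiv_aux {n : ℕ}
    (F : (Fin n → ℝ) → (Fin n → ℝ)) (c : Fin n → ℝ)
    (L : (Fin n → ℝ) →ₗ[ℝ] (Fin n → ℝ))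
    (Q : (Fin n → ℝ) →ₗ[ℝ] (Fin n → ℝ) →ₗ[ℝ] (Fin n → ℝ))
    (hF : ∀ v, F v = c + L v + Q v v) (v w : Fin n → ℝ) :
    fderiv ℝ F v w = L w + Q v w + Q w v := by
  let Q2 : (Fin n → ℝ) →ₗ[ℝ] ((Fin n → ℝ) →L[ℝ] (Fin n → ℝ)) :=
    { toFun := fun u => LinearMap.toContinuousLinearMap (Q u)
      map_add' := by intro a b; ext z; simp
      map_smul' := by intro a b; ext z; simp }
  let Qc : (Fin n → ℝ) →L[ℝ] (Fin n → ℝ) →L[ℝ] (Fin n → ℝ) :=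
    LinearMap.toContinuousLinearMap Q2
  have hQc : ∀ a b : Fin n → ℝ, Qc a b = Q a b := fun a b => rfl
  have hbil := Qc.isBoundedBilinearMap
  have hdiag : HasFDerivAt (fun u : Fin n → ℝ => (u, u))
      ((ContinuousLinearMap.id ℝ (Fin n → ℝ)).prod (ContinuousLinearMap.id ℝ (Fin n → ℝ))) v :=
    HasFDerivAt.prodMk (hasFDerivAt_id v) (hasFDerivAt_id v)
  have hQQ := HasFDerivAt.comp (f := fun u : Fin n → ℝ => (u, u))
    (g := fun p : (Fin n → ℝ) × (Fin n → ℝ) => Qc p.1 p.2) v (hbil.hasFDerivAt (v, v)) hdiag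
  let Lc : (Fin n → ℝ) →L[ℝ] (Fin n → ℝ) := LinearMap.toContinuousLinearMap L
  have h1 : HasFDerivAt (fun u : Fin n → ℝ => c + L u) Lc v := by
    exact (Lc.hasFDerivAt (x := v)).const_add c
  have h2 : HasFDerivAt (fun u : Fin n → ℝ => c + L u + Qc u u)
      (Lc + (hbil.deriv (v, v)).comp
        ((ContinuousLinearMap.id ℝ (Fin n → ℝ)).prod (ContinuousLinearMap.id ℝ (Fin n → ℝ)))) v :=
    h1.add hQQ
  have hFd : HasFDerivAt F
      (Lc + (hbil.deriv (v, v)).comp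
        ((ContinuousLinearMap.id ℝ (Fin n → ℝ)).prod (ContinuousLinearMap.id ℝ (Fin n → ℝ)))) v := by
    refine h2.congr_of_eventuallyEq (Filter.Eventually.of_forall fun u => ?_)
    rw [hF u]; rfl
  rw [hFd.fderiv]
  simp only [ContinuousLinearMap.add_apply, ContinuousLinearMap.coe_comp', Function.comp_apply,
    ContinuousLinearMap.prod_apply, ContinuousLinearMap.coe_id', id_eq,
    IsBoundedBilinearMap.deriv_apply]
  rw [hQc, hQc]
  show L w + (Q v w + Q w v) = L w + Q v w + Q w v
  abel

/-- For quadratic `F`, the error dynamics of the mutually coupled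
system is exactly linear: `r'(t) = H·r(t)`. -/
theorem quadratic_error_dynamics_linear {n : ℕ} (F : (Fin n → ℝ) → (Fin n → ℝ))
    (c : Fin n → ℝ) (L : (Fin n → ℝ) →ₗ[ℝ] (Fin n → ℝ))
    (Q : (Fin n → ℝ) →ₗ[ℝ] (Fin n → ℝ) →ₗ[ℝ] (Fin n → ℝ))
    (hQ : ∀ u v, Q u v = Q v u)
    (hF : ∀ v, F v = c + L v + Q v v)
    (H : Matrix (Fin n) (Fin n) ℝ) (x y s r : ℝ → (Fin n → ℝ))
    (hs : ∀ t, s t = (1 / 2 : ℝ) • (x t + y t))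
    (hr : ∀ t, r t = (1 / 2 : ℝ) • (x t - y t))
    (hx : ∀ t, HasDerivAt x (F (x t) + (H.mulVec (r t) - fderiv ℝ F (s t) (r t))) t)
    (hy : ∀ t, HasDerivAt y (F (y t) - (H.mulVec (r t) - fderiv ℝ F (s t) (r t))) t) :
    ∀ t, HasDerivAt r (H.mulVec (r t)) t := by
  intro t
  have hxs : x t = s t + r t := by
    rw [hs t, hr t]; module
  have hys : y t = s t - r t := by
    rw [hs t, hr t]; module
  have hD : fderiv ℝ F (s t) (r t) = L (r t) + Q (s t) (r t) + Q (r t) (s t) :=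
    quadratic_fderiv_aux F c L Q hF _ _
  have hder : HasDerivAt (fun u => (1 / 2 : ℝ) • (x u - y u))
      ((1 / 2 : ℝ) • ((F (x t) + (H.mulVec (r t) - fderiv ℝ F (s t) (r t))) -
        (F (y t) - (H.mulVec (r t) - fderiv ℝ F (s t) (r t))))) t :=
    ((hx t).sub (hy t)).const_smul (1 / 2 : ℝ)
  have hder2 : HasDerivAt r
      ((1 / 2 : ℝ) • ((F (x t) + (H.mulVec (r t) - fderiv ℝ F (s t) (r t))) -
        (F (y t) - (H.mulVec (r t) - fderiv ℝ F (s t) (r t))))) t :=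
    hder.congr_of_eventuallyEq (Filter.Eventually.of_forall hr)
  convert hder2 using 1
  rw [hF (x t), hF (y t), hD, hxs, hys]
  simp only [map_add, map_sub, LinearMap.add_apply, LinearMap.sub_apply]
  rw [hQ (r t) (s t)]
  module
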